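/- Let S = {v_1,…,v_n} ⊂ ℤ^n be a non-acute basis of a sublattice Λ ⊂ ℤ^n, let W = Σ_{i=1}^n v_i be its Wu element, let k_1,…,k_n be the unique integers with W = Σ_{i=1}^n k_i e_i, and set R_o = {i : k_i is odd}. If Σ_{i=1}^n k_i² > 4n − 3|R_o|, then Λ is not cubiquitous, i.e. there exists x ∈ ℤ^n with Λ ∩ (x + {0,1}^n) = ∅. -/
import Mathlib


open Finset

/-- The standard dot product on `ℤ^n`. -/
def dotZ {n : ℕ} (v w : Fin n → ℤ) : ℤ := ∑ i, v i * w i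

/-- A sublattice `Λ ⊆ ℤ^n` is cubiquitous if every unit cube `x + {0,1}^n`
contains a point of `Λ`. -/
def Cubiquitous {n : ℕ} (Λ : Submodule ℤ (Fin n → ℤ)) : Prop :=
  ∀ x : Fin n → ℤ, ∃ v ∈ Λ, ∀ i, v i = x i ∨ v i = x i + 1

/-- A family `v_1, …, v_n` of vectors in `ℤ^n` is non-acute. -/
def NonAcute {n : ℕ} (v : Fin n → Fin n → ℤ) : Prop :=
  (∀ i, 1 ≤ dotZ (v i) (v i)) ∧
  (∀ i j, i ≠ j → dotZ (v i) (v j) ≤ 0) ∧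
  (∀ i, -(∑ j ∈ univ.erase i, dotZ (v j) (v i)) ≤ dotZ (v i) (v i))

lemma dotZ_comm {n : ℕ} (a b : Fin n → ℤ) : dotZ a b = dotZ b a :=
  Finset.sum_congr rfl fun i _ => mul_comm _ _

lemma dotZ_sum_smul_left {n m : ℕ} (c : Fin m → ℤ) (v : Fin m → Fin n → ℤ) (w : Fin n → ℤ) :
    dotZ (∑ i, c i • v i) w = ∑ i, c i * dotZ (v i) w := by
  unfold dotZ
  simp only [Finset.sum_apply, Pi.smul_apply, smul_eq_mul, Finset.sum_mul, Finset.mul_sum]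
  rw [Finset.sum_comm]
  exact Finset.sum_congr rfl fun i _ => Finset.sum_congr rfl fun t _ => by ring

lemma dotZ_sum_smul_right {n m : ℕ} (c : Fin m → ℤ) (v : Fin m → Fin n → ℤ) (w : Fin n → ℤ) :
    dotZ w (∑ i, c i • v i) = ∑ i, c i * dotZ w (v i) := by
  rw [dotZ_comm, dotZ_sum_smul_left]
  exact Finset.sum_congr rfl fun i _ => by rw [dotZ_comm]

lemma dotZ_sum_left {n m : ℕ} (v : Fin m → Fin n → ℤ) (w : Fin n → ℤ) :
    dotZ (∑ i, v i) w = ∑ i, dotZ (v i) w := by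
  have := dotZ_sum_smul_left (fun _ : Fin m => (1:ℤ)) v w
  simpa using this

lemma mul_pred_nonneg (a : ℤ) : 0 ≤ a * (a - 1) := by
  rcases le_or_gt a 0 with h | h <;> nlinarith

lemma coeff_ineq {n : ℕ} (g : Fin n → Fin n → ℤ)
    (hsymm : ∀ i j, g i j = g j i)
    (hoff : ∀ i j, i ≠ j → g i j ≤ 0)
    (hrow : ∀ i, 0 ≤ ∑ j, g j i) (a : Fin n → ℤ) :
    ∑ i, ∑ j, a i * g i j ≤ ∑ i, ∑ j, a i * a j * g i j := by
  have hL' : (∑ i, ∑ j, a j * g i j) = ∑ i, ∑ j, a i * g i j := by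
    rw [Finset.sum_comm]
    exact Finset.sum_congr rfl fun j _ => Finset.sum_congr rfl fun i _ => by rw [hsymm]
  have hT2 : (∑ i, ∑ j, (a j * (a j - 1)) * g i j)
      = ∑ i, (a i * (a i - 1)) * ∑ j, g j i := by
    rw [Finset.sum_comm]
    exact Finset.sum_congr rfl fun i _ => by rw [Finset.mul_sum]
  have hT1 : (∑ i, ∑ j, (a i * (a i - 1)) * g i j)
      = ∑ i, (a i * (a i - 1)) * ∑ j, g j i := by
    refine Finset.sum_congr rfl fun i _ => ?_
    rw [Finset.mul_sum]
    exact Finset.sum_congr rfl fun j _ => by rw [hsymm]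
  have hmain : ((∑ i, ∑ j, a i * a j * g i j) - (∑ i, ∑ j, a i * g i j))
      + ((∑ i, ∑ j, a i * a j * g i j) - (∑ i, ∑ j, a j * g i j)) =
      (∑ i, ∑ j, (a i * (a i - 1)) * g i j) + (∑ i, ∑ j, (a j * (a j - 1)) * g i j)
        - ∑ i, ∑ j, (a i - a j)^2 * g i j := by
    simp only [← Finset.sum_sub_distrib, ← Finset.sum_add_distrib]
    exact Finset.sum_congr rfl fun i _ => Finset.sum_congr rfl fun j _ => by ring
  have hT3 : (∑ i, ∑ j, (a i - a j)^2 * g i j) ≤ 0 := by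
    refine Finset.sum_nonpos fun i _ => Finset.sum_nonpos fun j _ => ?_
    rcases eq_or_ne i j with rfl | hij
    · simp
    · exact mul_nonpos_of_nonneg_of_nonpos (sq_nonneg _) (hoff i j hij)
  have hpos : 0 ≤ ∑ i, (a i * (a i - 1)) * ∑ j, g j i :=
    Finset.sum_nonneg fun i _ => mul_nonneg (mul_pred_nonneg _) (hrow i)
  rw [hT1, hT2] at hmain
  linarith

lemma key_lemma {n : ℕ} (v : Fin n → Fin n → ℤ) (hna : NonAcute v)
    (w : Fin n → ℤ) (hw : w ∈ Submodule.span ℤ (Set.range v)) :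
    dotZ w (∑ j, v j) ≤ dotZ w w := by
  rw [Submodule.mem_span_range_iff_exists_fun] at hw
  obtain ⟨c, rfl⟩ := hw
  have hrow : ∀ i, 0 ≤ ∑ j, dotZ (v j) (v i) := by
    intro i
    have h3 := hna.2.2 i
    have := Finset.sum_erase_add univ (fun j => dotZ (v j) (v i)) (mem_univ i)
    linarith
  have hL : dotZ (∑ i, c i • v i) (∑ j, v j) = ∑ i, ∑ j, c i * dotZ (v i) (v j) := by
    rw [dotZ_sum_smul_left]
    refine Finset.sum_congr rfl fun i _ => ?_
    rw [dotZ_comm, dotZ_sum_left, Finset.mul_sum]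
    exact Finset.sum_congr rfl fun j _ => by rw [dotZ_comm]
  have hQ : dotZ (∑ i, c i • v i) (∑ i, c i • v i)
      = ∑ i, ∑ j, c i * c j * dotZ (v i) (v j) := by
    rw [dotZ_sum_smul_left]
    refine Finset.sum_congr rfl fun i _ => ?_
    rw [dotZ_sum_smul_right, Finset.mul_sum]
    exact Finset.sum_congr rfl fun j _ => by ring
  rw [hL, hQ]
  exact coeff_ineq _ (fun i j => dotZ_comm _ _) hna.2.1 hrow c

theorem stmt_0 {n : ℕ} (v : Fin n → Fin n → ℤ) (Λ : Submodule ℤ (Fin n → ℤ))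
    (hind : LinearIndependent ℤ v) (hspan : Submodule.span ℤ (Set.range v) = Λ)
    (hna : NonAcute v)
    (k : Fin n → ℤ) (hk : ∀ i, k i = (∑ j, v j) i)
    (h : ∑ i, (k i) ^ 2 > 4 * (n : ℤ) - 3 * ((univ.filter fun i => Odd (k i)).card : ℤ)) :
    ¬ Cubiquitous Λ := by
  intro hc
  have hpar : ∀ i, ∃ m : ℤ, k i = 2 * m + (if Odd (k i) then 1 else 0) := by
    intro i
    rcases Int.even_or_odd (k i) with he | ho
    · have hne : ¬ Odd (k i) := Int.not_odd_iff_even.mpr he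
      obtain ⟨m, hm⟩ := he
      exact ⟨m, by rw [if_neg hne]; omega⟩
    · have ho' := ho
      obtain ⟨m, hm⟩ := ho'
      exact ⟨m, by rw [if_pos ho]; omega⟩
  choose x hx using hpar
  obtain ⟨w, hwmem, hw⟩ := hc x
  rw [← hspan] at hwmem
  have hkey := key_lemma v hna w hwmem
  have hterm : ∀ i, (2 * w i - k i) ^ 2 ≤ (if Odd (k i) then (1:ℤ) else 4) := by
    intro i
    have hxi := hx i
    by_cases ho : Odd (k i)
    · rw [if_pos ho] at hxi ⊢
      have h2 : 2 * w i - k i = -1 ∨ 2 * w i - k i = 1 := by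
        rcases hw i with h1 | h1 <;> omega
      rcases h2 with h2 | h2 <;> rw [h2] <;> norm_num
    · rw [if_neg ho] at hxi ⊢
      have h2 : 2 * w i - k i = 0 ∨ 2 * w i - k i = 2 := by
        rcases hw i with h1 | h1 <;> omega
      rcases h2 with h2 | h2 <;> rw [h2] <;> norm_num
  have hsum1 : ∑ i, (2 * w i - k i) ^ 2 ≤ ∑ i, (if Odd (k i) then (1:ℤ) else 4) :=
    Finset.sum_le_sum fun i _ => hterm i
  have hcount : ∑ i, (if Odd (k i) then (1:ℤ) else 4)
      = 4 * (n : ℤ) - 3 * ((univ.filter fun i => Odd (k i)).card : ℤ) := by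
    have h1 : ∀ i ∈ univ, (if Odd (k i) then (1:ℤ) else 4)
        = 4 - 3 * (if Odd (k i) then (1:ℤ) else 0) := fun i _ => by split_ifs <;> ring
    rw [Finset.sum_congr rfl h1, Finset.sum_sub_distrib, Finset.sum_const,
      ← Finset.mul_sum, Finset.sum_boole]
    simp [card_univ, mul_comm]
  have hexp : ∑ i, (2 * w i - k i) ^ 2
      = ∑ i, (k i) ^ 2 + 4 * dotZ w w - 4 * dotZ w (∑ j, v j) := by
    have hdW : dotZ w (∑ j, v j) = ∑ i, w i * k i :=
      Finset.sum_congr rfl fun i _ => by rw [← hk i]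
    have hdw : dotZ w w = ∑ i, w i * w i := rfl
    rw [hdW, hdw, Finset.mul_sum, Finset.mul_sum, ← Finset.sum_add_distrib,
      ← Finset.sum_sub_distrib]
    exact Finset.sum_congr rfl fun i _ => by ring
  rw [hcount] at hsum1
  rw [hexp] at hsum1
  linarith
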